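/- For every natural number n, the 2-abelian complexity of the Thue–Morse word satisfies P(4n+1) = P(2n+1). -/

import Mathlib

open Fin.NatCast

/-- The Thue–Morse sequence: sum of binary digits of `n`, mod 2. -/
def tm (n : ℕ) : Fin 2 := ((Nat.digits 2 n).sum : Fin 2)

/-- The factor of the Thue–Morse word of length `n` starting at position `i`. -/
def tmWord (i n : ℕ) : List (Fin 2) := (List.range n).map (fun j => tm (i + j))

/-- A binary word is a factor of the Thue–Morse word. -/
def IsFactor (w : List (Fin 2)) : Prop := ∃ i : ℕ, w = tmWord i w.length

/-- Number of occurrences of the word `x` as a factor of `u`. -/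
def occCount (u x : List (Fin 2)) : ℕ :=
  ((List.range u.length).filter (fun i => (u.drop i).take x.length = x)).length

/-- Two binary words (of equal length) are 2-abelian equivalent: same first letter,
same last letter, and the same number of occurrences of every word of length 2. -/
def TwoAbelianEquiv (u v : List (Fin 2)) : Prop :=
  u.length = v.length ∧ u.take 1 = v.take 1 ∧
  u.drop (u.length - 1) = v.drop (v.length - 1) ∧
  ∀ x : List (Fin 2), x.length = 2 → occCount u x = occCount v x

/-- `P n` is the 2-abelian complexity of the Thue–Morse word: the number of
2-abelian equivalence classes of factors of length `n`. -/
noncomputable def P (n : ℕ) : ℕ :=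
  Nat.card (Quot (fun u v : {w : List (Fin 2) // w.length = n ∧ IsFactor w} =>
    TwoAbelianEquiv u.1 v.1))

/-- `pword w` counts the pairs in `w`: the total number of occurrences of `00` and `11`. -/
def pword (w : List (Fin 2)) : ℕ := occCount w [0, 0] + occCount w [1, 1]

/-- The set of possible pair counts of Thue–Morse factors of length `n`. -/
def pairs (n : ℕ) : Set ℕ :=
  { m | ∃ w : List (Fin 2), w.length = n ∧ IsFactor w ∧ pword w = m }

/-- The set of possible pair counts of Thue–Morse factors of length `n`
occurring at some odd position (pure odd factors). -/
def PAIRS (n : ℕ) : Set ℕ := { m | ∃ i : ℕ, i % 2 = 1 ∧ pword (tmWord i n) = m }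


-- ## Auxiliary development

lemma fin2 (c : Fin 2) : c = 0 ∨ c = 1 := by omega

lemma occCount_nil (x : List (Fin 2)) : occCount [] x = 0 := rfl

lemma occCount_cons (c : Fin 2) (u x : List (Fin 2)) (hx : x.length = 2) :
    occCount (c :: u) x = (if (c :: u).take 2 = x then 1 else 0) + occCount u x := by
  unfold occCount
  rw [hx, ← List.countP_eq_length_filter, ← List.countP_eq_length_filter]
  show List.countP _ (List.range (u.length + 1)) = _
  rw [List.range_succ_eq_map, List.countP_cons, List.countP_map]
  have h2 : (fun i => decide (List.take 2 (List.drop i (c :: u)) = x)) ∘ Nat.succ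
      = fun i => decide (List.take 2 (List.drop i u) = x) := by
    funext i; rfl
  rw [h2, Nat.add_comm]
  congr 1
  by_cases h : (c :: u).take 2 = x <;> simp [h] <;> exact if_congr Iff.rfl rfl rfl

lemma occCount_singleton (c : Fin 2) (x : List (Fin 2)) (hx : x.length = 2) :
    occCount [c] x = 0 := by
  rw [occCount_cons c [] x hx, occCount_nil]
  have : ¬ ([c] : List (Fin 2)).take 2 = x := by
    intro h; apply_fun List.length at h; simp at h; omega
  simp only [this, if_false]

lemma drop_last_cons (d : Fin 2) (t : List (Fin 2)) (h : t ≠ []) :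
    (d::t).drop ((d::t).length - 1) = t.drop (t.length - 1) := by
  cases t with
  | nil => exact absurd rfl h
  | cons e t' => simp [List.drop_succ_cons]

lemma exists_last (u : List (Fin 2)) (h : u ≠ []) :
    ∃ l : Fin 2, u.drop (u.length - 1) = [l] := by
  induction u with
  | nil => exact absurd rfl h
  | cons d t ih =>
    cases t with
    | nil => exact ⟨d, rfl⟩
    | cons e t' =>
      obtain ⟨l, hl⟩ := ih (by simp)
      exact ⟨l, by rw [drop_last_cons d _ (by simp)]; exact hl⟩

lemma occCount_snoc (u : List (Fin 2)) (h : u ≠ []) (c : Fin 2) (x : List (Fin 2))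
    (hx : x.length = 2) :
    occCount (u ++ [c]) x = occCount u x +
      (if u.drop (u.length - 1) ++ [c] = x then 1 else 0) := by
  induction u with
  | nil => exact absurd rfl h
  | cons d t ih =>
    cases t with
    | nil =>
      rw [show ([d] ++ [c] : List (Fin 2)) = [d, c] from rfl,
        occCount_cons d [c] x hx, occCount_singleton d x hx, occCount_singleton c x hx]
      simp
    | cons e t' =>
      have hne : (e :: t') ≠ [] := by simp
      rw [show ((d :: e :: t') ++ [c]) = d :: ((e :: t') ++ [c]) from rfl,
        occCount_cons d _ x hx, ih hne, occCount_cons d (e::t') x hx,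
        drop_last_cons d _ hne]
      have h3 : List.take 2 (d :: (e :: t' ++ [c])) = List.take 2 (d :: e :: t') := rfl
      rw [h3]; omega

lemma occ_sum (u : List (Fin 2)) (h : u ≠ []) :
    occCount u [0,0] + occCount u [0,1] + occCount u [1,0] + occCount u [1,1] + 1
      = u.length := by
  induction u with
  | nil => exact absurd rfl h
  | cons d t ih =>
    cases t with
    | nil => simp [occCount_singleton]
    | cons e t' =>
      rw [occCount_cons d _ [0,0] (by rfl), occCount_cons d _ [0,1] (by rfl),
        occCount_cons d _ [1,0] (by rfl), occCount_cons d _ [1,1] (by rfl)]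
      have hih := ih (by simp)
      have ht2 : List.take 2 (d :: e :: t') = [d, e] := rfl
      rw [ht2] at *
      rcases fin2 d with hd | hd <;> rcases fin2 e with he | he <;> subst hd he <;>
        simp only [List.length_cons] at * <;> norm_num <;> omega

lemma occ_diff (u : List (Fin 2)) (h : u ≠ []) :
    occCount u [0,1] + (if u.take 1 = [1] ∧ u.drop (u.length - 1) = [0] then 1 else 0)
      = occCount u [1,0] +
        (if u.take 1 = [0] ∧ u.drop (u.length - 1) = [1] then 1 else 0) := by
  induction u with
  | nil => exact absurd rfl h
  | cons d t ih =>
    cases t with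
    | nil =>
      rw [occCount_singleton d _ (by rfl), occCount_singleton d _ (by rfl)]
      rcases fin2 d with hd | hd <;> subst hd <;> simp
    | cons e t' =>
      have hne : (e :: t') ≠ [] := by simp
      obtain ⟨l, hl⟩ := exists_last (e :: t') hne
      have hd1 : (d :: e :: t').drop ((d :: e :: t').length - 1) = [l] := by
        rw [drop_last_cons d _ hne]; exact hl
      have hih := ih hne
      rw [hl] at hih
      have he1 : (e :: t').take 1 = [e] := rfl
      rw [he1] at hih
      rw [occCount_cons d _ [0,1] (by rfl), occCount_cons d _ [1,0] (by rfl), hd1]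
      have ht2 : List.take 2 (d :: e :: t') = [d, e] := rfl
      have ht1 : List.take 1 (d :: e :: t') = [d] := rfl
      rw [ht2, ht1]
      rcases fin2 d with hd | hd <;> rcases fin2 e with he | he <;>
        rcases fin2 l with hll | hll <;> subst hd he hll <;> norm_num at hih ⊢ <;> omega

lemma occ_count0 (u : List (Fin 2)) (h : u ≠ []) :
    u.count 0 = occCount u [0,0] + occCount u [0,1] +
      (if u.drop (u.length - 1) = [0] then 1 else 0) := by
  induction u with
  | nil => exact absurd rfl h
  | cons d t ih =>
    cases t with
    | nil =>
      rw [occCount_singleton d _ (by rfl), occCount_singleton d _ (by rfl)]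
      rcases fin2 d with hd | hd <;> subst hd <;> simp
    | cons e t' =>
      have hne : (e :: t') ≠ [] := by simp
      obtain ⟨l, hl⟩ := exists_last (e :: t') hne
      have hd1 : (d :: e :: t').drop ((d :: e :: t').length - 1) = [l] := by
        rw [drop_last_cons d _ hne]; exact hl
      have hih := ih hne
      rw [hl] at hih
      rw [occCount_cons d _ [0,0] (by rfl), occCount_cons d _ [0,1] (by rfl), hd1,
        List.count_cons]
      have ht2 : List.take 2 (d :: e :: t') = [d, e] := rfl
      rw [ht2]
      rcases fin2 d with hd | hd <;> rcases fin2 e with he | he <;>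
        rcases fin2 l with hll | hll <;> subst hd he hll <;> norm_num at hih ⊢ <;> omega

lemma occ_count1 (u : List (Fin 2)) (h : u ≠ []) :
    u.count 1 = occCount u [1,0] + occCount u [1,1] +
      (if u.drop (u.length - 1) = [1] then 1 else 0) := by
  induction u with
  | nil => exact absurd rfl h
  | cons d t ih =>
    cases t with
    | nil =>
      rw [occCount_singleton d _ (by rfl), occCount_singleton d _ (by rfl)]
      rcases fin2 d with hd | hd <;> subst hd <;> simp
    | cons e t' =>
      have hne : (e :: t') ≠ [] := by simp
      obtain ⟨l, hl⟩ := exists_last (e :: t') hne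
      have hd1 : (d :: e :: t').drop ((d :: e :: t').length - 1) = [l] := by
        rw [drop_last_cons d _ hne]; exact hl
      have hih := ih hne
      rw [hl] at hih
      rw [occCount_cons d _ [1,0] (by rfl), occCount_cons d _ [1,1] (by rfl), hd1,
        List.count_cons]
      have ht2 : List.take 2 (d :: e :: t') = [d, e] := rfl
      rw [ht2]
      rcases fin2 d with hd | hd <;> rcases fin2 e with he | he <;>
        rcases fin2 l with hll | hll <;> subst hd he hll <;> norm_num at hih ⊢ <;> omega

def mu (w : List (Fin 2)) : List (Fin 2) := w.flatMap (fun c => [c, c + 1])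

lemma mu_nil : mu [] = [] := rfl
lemma mu_cons (c : Fin 2) (w : List (Fin 2)) : mu (c :: w) = c :: (c+1) :: mu w := rfl
lemma mu_length (w : List (Fin 2)) : (mu w).length = 2 * w.length := by
  induction w with
  | nil => rfl
  | cons c w ih => rw [mu_cons]; simp at *; omega


lemma mu_occ (w : List (Fin 2)) :
    occCount (mu w) [0,0] = occCount w [1,0] ∧
    occCount (mu w) [1,1] = occCount w [0,1] ∧
    occCount (mu w) [0,1] = w.count 0 + occCount w [1,1] ∧
    occCount (mu w) [1,0] = w.count 1 + occCount w [0,0] := by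
  induction w with
  | nil => exact ⟨rfl, rfl, rfl, rfl⟩
  | cons c w ih =>
    obtain ⟨ih1, ih2, ih3, ih4⟩ := ih
    rw [mu_cons]
    cases w with
    | nil =>
      rcases fin2 c with hc | hc <;> subst hc <;>
        refine ⟨?_, ?_, ?_, ?_⟩ <;>
        rw [occCount_cons _ _ _ (by rfl), occCount_cons _ _ _ (by rfl)] <;>
        simp [occCount_nil, occCount_singleton, mu_nil] <;> rfl
    | cons e w' =>
      have hmu : mu (e :: w') = e :: (e+1) :: mu w' := rfl
      have k1 : occCount (c :: (c+1) :: mu (e :: w')) [0,0]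
          = (if ([c, c+1] : List (Fin 2)) = [0,0] then 1 else 0)
            + ((if ([c+1, e] : List (Fin 2)) = [0,0] then 1 else 0)
            + occCount (mu (e :: w')) [0,0]) := by
        rw [occCount_cons _ _ _ (by rfl), occCount_cons _ _ _ (by rfl)]
        rw [hmu]; rfl
      have k2 : occCount (c :: (c+1) :: mu (e :: w')) [1,1]
          = (if ([c, c+1] : List (Fin 2)) = [1,1] then 1 else 0)
            + ((if ([c+1, e] : List (Fin 2)) = [1,1] then 1 else 0)
            + occCount (mu (e :: w')) [1,1]) := by
        rw [occCount_cons _ _ _ (by rfl), occCount_cons _ _ _ (by rfl)]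
        rw [hmu]; rfl
      have k3 : occCount (c :: (c+1) :: mu (e :: w')) [0,1]
          = (if ([c, c+1] : List (Fin 2)) = [0,1] then 1 else 0)
            + ((if ([c+1, e] : List (Fin 2)) = [0,1] then 1 else 0)
            + occCount (mu (e :: w')) [0,1]) := by
        rw [occCount_cons _ _ _ (by rfl), occCount_cons _ _ _ (by rfl)]
        rw [hmu]; rfl
      have k4 : occCount (c :: (c+1) :: mu (e :: w')) [1,0]
          = (if ([c, c+1] : List (Fin 2)) = [1,0] then 1 else 0)
            + ((if ([c+1, e] : List (Fin 2)) = [1,0] then 1 else 0)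
            + occCount (mu (e :: w')) [1,0]) := by
        rw [occCount_cons _ _ _ (by rfl), occCount_cons _ _ _ (by rfl)]
        rw [hmu]; rfl
      have g1 : occCount (c :: e :: w') [1,0]
          = (if ([c, e] : List (Fin 2)) = [1,0] then 1 else 0) + occCount (e :: w') [1,0] :=
        occCount_cons _ _ _ (by rfl)
      have g2 : occCount (c :: e :: w') [0,1]
          = (if ([c, e] : List (Fin 2)) = [0,1] then 1 else 0) + occCount (e :: w') [0,1] :=
        occCount_cons _ _ _ (by rfl)
      have g3 : occCount (c :: e :: w') [1,1]
          = (if ([c, e] : List (Fin 2)) = [1,1] then 1 else 0) + occCount (e :: w') [1,1] :=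
        occCount_cons _ _ _ (by rfl)
      have g4 : occCount (c :: e :: w') [0,0]
          = (if ([c, e] : List (Fin 2)) = [0,0] then 1 else 0) + occCount (e :: w') [0,0] :=
        occCount_cons _ _ _ (by rfl)
      have g5 : (c :: e :: w').count 0 = (e :: w').count 0 + (if c = 0 then 1 else 0) := by
        rw [List.count_cons]; congr 1
        by_cases h : c = 0 <;> simp [h, beq_iff_eq]
      have g6 : (c :: e :: w').count 1 = (e :: w').count 1 + (if c = 1 then 1 else 0) := by
        rw [List.count_cons]; congr 1
        by_cases h : c = 1 <;> simp [h, beq_iff_eq]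
      rw [k1, k2, k3, k4, g1, g2, g3, g4, g5, g6]
      refine ⟨?_, ?_, ?_, ?_⟩ <;>
      rcases fin2 c with hc | hc <;> rcases fin2 e with he | he <;> subst hc he <;>
        simp only [show ((0:Fin 2)+1) = 1 from rfl, show ((1:Fin 2)+1) = 0 from rfl]
          at ih1 ih2 ih3 ih4 ⊢ <;>
        simp at ih1 ih2 ih3 ih4 ⊢ <;> omega

lemma tm_zero : tm 0 = 0 := by simp [tm]

lemma tm_double (j : ℕ) : tm (2 * j) = tm j := by
  rcases Nat.eq_zero_or_pos j with h | h
  · subst h; simp [tm]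
  · unfold tm
    rw [Nat.digits_def' (by norm_num : (1:ℕ) < 2) (by omega : 0 < 2 * j)]
    have h1 : 2 * j % 2 = 0 := by omega
    have h2 : 2 * j / 2 = j := by omega
    rw [h1, h2, List.sum_cons, Nat.cast_add]
    simp

lemma tm_double_add_one (j : ℕ) : tm (2 * j + 1) = tm j + 1 := by
  unfold tm
  rw [Nat.digits_def' (by norm_num : (1:ℕ) < 2) (by omega : 0 < 2 * j + 1)]
  have h1 : (2 * j + 1) % 2 = 1 := by omega
  have h2 : (2 * j + 1) / 2 = j := by omega
  rw [h1, h2, List.sum_cons, Nat.cast_add]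
  push_cast
  exact add_comm _ _

lemma tmWord_length (i n : ℕ) : (tmWord i n).length = n := by simp [tmWord]

lemma tmWord_zero (i : ℕ) : tmWord i 0 = [] := rfl

lemma tmWord_succ (i n : ℕ) : tmWord i (n + 1) = tmWord i n ++ [tm (i + n)] := by
  unfold tmWord; rw [List.range_succ, List.map_append]; rfl

lemma tmWord_cons (i n : ℕ) : tmWord i (n + 1) = tm i :: tmWord (i + 1) n := by
  unfold tmWord
  rw [List.range_succ_eq_map, List.map_cons, List.map_map]
  refine congrArg₂ List.cons (by norm_num) ?_
  apply List.map_congr_left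
  intro a _
  simp only [Function.comp_apply]
  congr 1
  omega

lemma tmWord_mu (j k : ℕ) : tmWord (2 * j) (2 * k) = mu (tmWord j k) := by
  induction k with
  | zero => rfl
  | succ k ih =>
    rw [show 2 * (k + 1) = (2 * k + 1) + 1 from rfl, tmWord_succ, tmWord_succ,
      tmWord_succ j k, List.append_assoc]
    have hmu : ∀ (w : List (Fin 2)) c, mu (w ++ [c]) = mu w ++ [c, c+1] := by
      intro w c
      induction w with
      | nil => rfl
      | cons d t iht => rw [List.cons_append, mu_cons, mu_cons, iht]; rfl
    rw [hmu, ← ih]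
    congr 1
    rw [show 2 * j + (2 * k + 1) = 2 * (j + k) + 1 from by ring, tm_double_add_one,
      show 2 * j + 2 * k = 2 * (j + k) from by ring, tm_double]
    rfl

lemma tmWord_ne_nil (i n : ℕ) : tmWord i (n + 1) ≠ [] := by
  intro h; apply_fun List.length at h; rw [tmWord_length] at h; simp at h

lemma tmWord_take_one (i n : ℕ) : (tmWord i (n + 1)).take 1 = [tm i] := by
  rw [tmWord_cons]; rfl

lemma tmWord_drop_last (i n : ℕ) :
    (tmWord i (n + 1)).drop ((tmWord i (n + 1)).length - 1) = [tm (i + n)] := by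
  rw [tmWord_length, Nat.add_sub_cancel, tmWord_succ]
  have h := List.drop_left (l₁ := tmWord i n) (l₂ := [tm (i + n)])
  rwa [tmWord_length] at h

section
variable (j k : ℕ)

lemma child_mu_snoc : mu (tmWord j (k+1)) = tmWord (2*j) (2*k+1) ++ [tm (j+k) + 1] := by
  rw [← tmWord_mu j (k+1), show 2*(k+1) = (2*k+1)+1 from rfl, tmWord_succ]
  congr 2
  rw [show 2*j + (2*k+1) = 2*(j+k)+1 from by ring, tm_double_add_one]

lemma child_mu_cons : mu (tmWord j (k+1)) = tm j :: tmWord (2*j+1) (2*k+1) := by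
  rw [← tmWord_mu j (k+1), show 2*(k+1) = (2*k+1)+1 from rfl, tmWord_cons, tm_double]

lemma child_ue_last :
    (tmWord (2*j) (2*k+1)).drop ((tmWord (2*j) (2*k+1)).length - 1) = [tm (j+k)] := by
  rw [show (2*k+1) = 2*k + 1 from rfl, tmWord_drop_last,
    show (2*j : ℕ) + 2*k = 2*(j+k) from by ring, tm_double]

lemma child_mu_take2 : List.take 2 (mu (tmWord j (k+1))) = [tm j, tm j + 1] := by
  rw [tmWord_cons, mu_cons]; rfl

lemma child_occ_eq :
    occCount (tmWord (2*j) (2*k+1)) [0,0] = occCount (tmWord j (k+1)) [1,0] ∧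
    occCount (tmWord (2*j) (2*k+1)) [1,1] = occCount (tmWord j (k+1)) [0,1] ∧
    occCount (tmWord (2*j+1) (2*k+1)) [0,0] = occCount (tmWord j (k+1)) [1,0] ∧
    occCount (tmWord (2*j+1) (2*k+1)) [1,1] = occCount (tmWord j (k+1)) [0,1] := by
  have f1 := child_mu_snoc j k
  have f3 := child_mu_cons j k
  have f5 := child_ue_last j k
  have f7 := child_mu_take2 j k
  have hne : tmWord (2*j) (2*k+1) ≠ [] := tmWord_ne_nil _ _
  obtain ⟨m1, m2, m3, m4⟩ := mu_occ (tmWord j (k+1))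
  have g00 : occCount (mu (tmWord j (k+1))) [0,0] = occCount (tmWord (2*j) (2*k+1)) [0,0] +
      (if ([tm (j+k), tm (j+k)+1] : List (Fin 2)) = [0,0] then 1 else 0) := by
    rw [f1, occCount_snoc _ hne _ _ (by rfl), f5]; rfl
  have g11 : occCount (mu (tmWord j (k+1))) [1,1] = occCount (tmWord (2*j) (2*k+1)) [1,1] +
      (if ([tm (j+k), tm (j+k)+1] : List (Fin 2)) = [1,1] then 1 else 0) := by
    rw [f1, occCount_snoc _ hne _ _ (by rfl), f5]; rfl
  have h00 : occCount (mu (tmWord j (k+1))) [0,0] =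
      (if ([tm j, tm j + 1] : List (Fin 2)) = [0,0] then 1 else 0)
      + occCount (tmWord (2*j+1) (2*k+1)) [0,0] := by
    rw [f3, occCount_cons _ _ _ (by rfl), ← f3, f7]
  have h11 : occCount (mu (tmWord j (k+1))) [1,1] =
      (if ([tm j, tm j + 1] : List (Fin 2)) = [1,1] then 1 else 0)
      + occCount (tmWord (2*j+1) (2*k+1)) [1,1] := by
    rw [f3, occCount_cons _ _ _ (by rfl), ← f3, f7]
  rcases fin2 (tm j) with h | h <;> rcases fin2 (tm (j+k)) with h' | h' <;>
    rw [h] at h00 h11 <;> rw [h'] at g00 g11 <;>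
    simp [show ((0:Fin 2)+1) = 1 from rfl, show ((1:Fin 2)+1) = 0 from rfl]
      at g00 g11 h00 h11 <;> omega
end

lemma child_occ_cross (j k : ℕ) :
    (occCount (tmWord (2*j) (2*k+1)) [1,0] + occCount (tmWord j (k+1)) [0,1] = k) ∧
    (occCount (tmWord (2*j) (2*k+1)) [0,1] + occCount (tmWord j (k+1)) [1,0] = k) ∧
    (occCount (tmWord (2*j+1) (2*k+1)) [1,0] + occCount (tmWord j (k+1)) [0,1]
      + (if tm j = 1 then 1 else 0) = k + (if tm (j+k) = 1 then 1 else 0)) ∧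
    (occCount (tmWord (2*j+1) (2*k+1)) [0,1] + occCount (tmWord j (k+1)) [1,0]
      + (if tm j = 0 then 1 else 0) = k + (if tm (j+k) = 0 then 1 else 0)) := by
  have f1 := child_mu_snoc j k
  have f3 := child_mu_cons j k
  have f5 := child_ue_last j k
  have f7 := child_mu_take2 j k
  have hne : tmWord (2*j) (2*k+1) ≠ [] := tmWord_ne_nil _ _
  have hwne : tmWord j (k+1) ≠ [] := tmWord_ne_nil _ _
  obtain ⟨m1, m2, m3, m4⟩ := mu_occ (tmWord j (k+1))
  have hsum := occ_sum (tmWord j (k+1)) hwne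
  rw [tmWord_length] at hsum
  have hc0 := occ_count0 (tmWord j (k+1)) hwne
  have hc1 := occ_count1 (tmWord j (k+1)) hwne
  rw [tmWord_drop_last] at hc0 hc1
  have g01 : occCount (mu (tmWord j (k+1))) [0,1] = occCount (tmWord (2*j) (2*k+1)) [0,1] +
      (if ([tm (j+k), tm (j+k)+1] : List (Fin 2)) = [0,1] then 1 else 0) := by
    rw [f1, occCount_snoc _ hne _ _ (by rfl), f5]; rfl
  have g10 : occCount (mu (tmWord j (k+1))) [1,0] = occCount (tmWord (2*j) (2*k+1)) [1,0] +
      (if ([tm (j+k), tm (j+k)+1] : List (Fin 2)) = [1,0] then 1 else 0) := by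
    rw [f1, occCount_snoc _ hne _ _ (by rfl), f5]; rfl
  have h01 : occCount (mu (tmWord j (k+1))) [0,1] =
      (if ([tm j, tm j + 1] : List (Fin 2)) = [0,1] then 1 else 0)
      + occCount (tmWord (2*j+1) (2*k+1)) [0,1] := by
    rw [f3, occCount_cons _ _ _ (by rfl), ← f3, f7]
  have h10 : occCount (mu (tmWord j (k+1))) [1,0] =
      (if ([tm j, tm j + 1] : List (Fin 2)) = [1,0] then 1 else 0)
      + occCount (tmWord (2*j+1) (2*k+1)) [1,0] := by
    rw [f3, occCount_cons _ _ _ (by rfl), ← f3, f7]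
  rcases fin2 (tm j) with h | h <;> rcases fin2 (tm (j+k)) with h' | h' <;>
    rw [h] at h01 h10 <;> rw [h'] at g01 g10 hc0 hc1 <;> rw [h, h'] <;>
    simp [show ((0:Fin 2)+1) = 1 from rfl, show ((1:Fin 2)+1) = 0 from rfl]
      at g01 g10 h01 h10 hc0 hc1 ⊢ <;> omega


def Iinv (u : List (Fin 2)) : List (Fin 2) × List (Fin 2) × ℕ × ℕ :=
  (u.take 1, u.drop (u.length - 1), occCount u [0,0], occCount u [1,1])

def TSet (n : ℕ) : Set (List (Fin 2)) := {w | w.length = n ∧ IsFactor w}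

lemma equiv_iff (u v : List (Fin 2)) (hl : u.length = v.length) :
    TwoAbelianEquiv u v ↔ Iinv u = Iinv v := by
  constructor
  · rintro ⟨-, h1, h2, hx⟩
    simp only [Iinv, Prod.mk.injEq]
    exact ⟨h1, h2, hx [0,0] rfl, hx [1,1] rfl⟩
  · intro h
    simp only [Iinv, Prod.mk.injEq] at h
    obtain ⟨h1, h2, h3, h4⟩ := h
    refine ⟨hl, h1, h2, ?_⟩
    intro x hx
    rcases List.length_eq_two.mp hx with ⟨x0, x1, rfl⟩
    have key : u = [] ∨ (u ≠ [] ∧ v ≠ []) := by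
      cases u with
      | nil => left; rfl
      | cons c t =>
        right
        refine ⟨by simp, ?_⟩
        intro hv
        rw [hv] at hl; simp at hl
    rcases key with rfl | ⟨hu, hv⟩
    · have hv : v = [] := by
        cases v with
        | nil => rfl
        | cons c t => simp at hl
      subst hv; rfl
    · have su := occ_sum u hu
      have sv := occ_sum v hv
      have du := occ_diff u hu
      have dv := occ_diff v hv
      rw [h1, h2] at du
      rcases fin2 x0 with h|h <;> rcases fin2 x1 with h'|h' <;> subst h h' <;> omega

lemma P_eq (n : ℕ) : P n = (Iinv '' TSet n).ncard := by
  rw [← Nat.card_coe_set_eq]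
  unfold P
  have hresp : ∀ u v : {w : List (Fin 2) // w.length = n ∧ IsFactor w},
      TwoAbelianEquiv u.1 v.1 →
      (⟨Iinv u.1, ⟨u.1, u.2, rfl⟩⟩ : ↥(Iinv '' TSet n))
        = ⟨Iinv v.1, ⟨v.1, v.2, rfl⟩⟩ := by
    intro u v huv
    exact Subtype.ext ((equiv_iff u.1 v.1 huv.1).mp huv)
  refine Nat.card_congr (Equiv.ofBijective (Quot.lift _ hresp) ⟨?_, ?_⟩)
  · intro q1 q2
    induction q1 using Quot.ind with | _ u =>
    induction q2 using Quot.ind with | _ v =>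
    intro h
    apply Quot.sound
    have h2 : Iinv u.1 = Iinv v.1 := congrArg Subtype.val h
    exact (equiv_iff u.1 v.1 (u.2.1.trans v.2.1.symm)).mpr h2
  · rintro ⟨y, u, hu, rfl⟩
    exact ⟨Quot.mk _ ⟨u, hu⟩, rfl⟩

lemma tmWord_ne_nil' (i n : ℕ) (h : n ≠ 0) : tmWord i n ≠ [] := by
  obtain ⟨n', rfl⟩ : ∃ n', n = n' + 1 := ⟨n - 1, by omega⟩
  exact tmWord_ne_nil i n'

lemma tmWord_take_one' (i n : ℕ) (h : n ≠ 0) : (tmWord i n).take 1 = [tm i] := by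
  obtain ⟨n', rfl⟩ : ∃ n', n = n' + 1 := ⟨n - 1, by omega⟩
  exact tmWord_take_one i n'

lemma tmWord_drop_last' (i n : ℕ) (h : n ≠ 0) :
    (tmWord i n).drop (n - 1) = [tm (i + (n - 1))] := by
  obtain ⟨n', rfl⟩ : ∃ n', n = n' + 1 := ⟨n - 1, by omega⟩
  have := tmWord_drop_last i n'
  rw [tmWord_length] at this
  simpa using this

lemma tm_one : tm 1 = 1 := by
  have := tm_double_add_one 0; rw [tm_zero] at this; simpa using this
lemma tm_two : tm 2 = 1 := by have := tm_double 1; rw [tm_one] at this; exact this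
lemma tm_three : tm 3 = 0 := by
  have := tm_double_add_one 1; rw [tm_one] at this
  simpa using this
lemma tm_four : tm 4 = 1 := by have := tm_double 2; rw [tm_two] at this; exact this
lemma tm_five : tm 5 = 0 := by
  have := tm_double_add_one 2; rw [tm_two] at this; simpa using this
lemma tm_six : tm 6 = 0 := by have := tm_double 3; rw [tm_three] at this; exact this

lemma tmWord_one (i : ℕ) : tmWord i 1 = [tm i] := by
  rw [tmWord_cons, tmWord_zero]
lemma tmWord_two (i : ℕ) : tmWord i 2 = [tm i, tm (i+1)] := by
  rw [tmWord_cons, tmWord_one]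

lemma pword_pair (c d : Fin 2) :
    occCount [c, d] [0,0] + occCount [c, d] [1,1] =
      (if ([c,d] : List (Fin 2)) = [0,0] then 1 else 0) +
      (if ([c,d] : List (Fin 2)) = [1,1] then 1 else 0) := by
  rw [occCount_cons c [d] [0,0] (by rfl), occCount_cons c [d] [1,1] (by rfl),
    occCount_singleton d _ (by rfl), occCount_singleton d _ (by rfl)]
  rfl

lemma flip_closure : ∀ m i : ℕ, ∃ i' : ℕ,
    (tmWord i' m).take 1 = ((tmWord i m).take 1).map (fun c => c+1) ∧
    (tmWord i' m).drop (m-1) = ((tmWord i m).drop (m-1)).map (fun c => c+1) ∧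
    occCount (tmWord i' m) [0,0] + occCount (tmWord i' m) [1,1]
      = occCount (tmWord i m) [0,0] + occCount (tmWord i m) [1,1] := by
  intro m
  induction m using Nat.strong_induction_on with
  | _ m IH =>
  intro i
  rcases Nat.lt_or_ge m 3 with hm | hm
  · -- base cases m = 0, 1, 2
    interval_cases m
    · exact ⟨i, by simp [tmWord_zero]⟩
    · rcases fin2 (tm i) with h | h
      · refine ⟨1, ?_, ?_, ?_⟩ <;>
          simp [tmWord_one, tm_one, h, occCount_singleton,
            show ((0:Fin 2)+1) = 1 from rfl]
      · refine ⟨0, ?_, ?_, ?_⟩ <;>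
          simp [tmWord_one, tm_zero, h, occCount_singleton,
            show ((1:Fin 2)+1) = 0 from rfl]
    · have e0 : ((0:Fin 2)+1) = 1 := rfl
      have e1 : ((1:Fin 2)+1) = 0 := rfl
      rcases fin2 (tm i) with h | h <;> rcases fin2 (tm (i+1)) with h' | h'
      · refine ⟨1, ?_, ?_, ?_⟩ <;>
          simp [tmWord_two, tm_one, tm_two, h, h', pword_pair, e0, e1]
      · refine ⟨2, ?_, ?_, ?_⟩ <;>
          simp [tmWord_two, tm_two, tm_three, h, h', pword_pair, e0, e1]
      · refine ⟨3, ?_, ?_, ?_⟩ <;>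
          simp [tmWord_two, tm_three, tm_four, h, h', pword_pair, e0, e1]
      · refine ⟨5, ?_, ?_, ?_⟩ <;>
          simp [tmWord_two, tm_five, tm_six, h, h', pword_pair, e0, e1]
  · -- m ≥ 3
    rcases Nat.even_or_odd m with ⟨k, hk⟩ | ⟨k, hk⟩
    · -- m = 2k, k ≥ 2
      have hk2 : m = 2 * k := by omega
      have hkge : 2 ≤ k := by omega
      subst hk2
      rcases Nat.even_or_odd i with ⟨j, hj⟩ | ⟨j, hj⟩
      · -- i = 2j : u = mu (tmWord j k)
        have hj2 : i = 2 * j := by omega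
        subst hj2
        obtain ⟨j', h1, h2, h3⟩ := IH k (by omega) j
        -- extract scalar facts
        rw [tmWord_take_one' j k (by omega), tmWord_take_one' j' k (by omega)] at h1
        rw [tmWord_drop_last' j k (by omega), tmWord_drop_last' j' k (by omega)] at h2
        simp only [List.map_cons, List.map_nil, List.cons.injEq, and_true] at h1 h2
        refine ⟨2 * j', ?_, ?_, ?_⟩
        · rw [tmWord_take_one' _ _ (by omega), tmWord_take_one' _ _ (by omega),
            tm_double, tm_double]
          simp [h1]
        · rw [tmWord_drop_last' _ _ (by omega), tmWord_drop_last' _ _ (by omega),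
            (by omega : 2*j' + (2*k - 1) = 2*(j' + (k-1)) + 1),
            (by omega : 2*j + (2*k - 1) = 2*(j + (k-1)) + 1),
            tm_double_add_one, tm_double_add_one]
          simp [h2]
        · rw [tmWord_mu, tmWord_mu]
          obtain ⟨ma, mb, -, -⟩ := mu_occ (tmWord j k)
          obtain ⟨ma', mb', -, -⟩ := mu_occ (tmWord j' k)
          have s1 := occ_sum (tmWord j k) (tmWord_ne_nil' _ _ (by omega))
          have s2 := occ_sum (tmWord j' k) (tmWord_ne_nil' _ _ (by omega))
          rw [tmWord_length] at s1 s2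
          omega
      · -- i = 2j+1
        have hj2 : i = 2 * j + 1 := by omega
        subst hj2
        obtain ⟨j', h1, h2, h3⟩ := IH (k+1) (by omega) j
        rw [tmWord_take_one' j _ (by omega), tmWord_take_one' j' _ (by omega)] at h1
        rw [tmWord_drop_last' j _ (by omega), tmWord_drop_last' j' _ (by omega)] at h2
        simp only [List.map_cons, List.map_nil, List.cons.injEq, and_true] at h1 h2
        rw [(by omega : j + (k + 1 - 1)= j + k), (by omega : j' + (k + 1 - 1) = j' + k)] at h2
        -- occ00/11 of (tmWord (2j+1) (2k)) equal occ10/01 of (tmWord j (k+1))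
        have key : ∀ J : ℕ, occCount (tmWord (2*J+1) (2*k)) [0,0]
              = occCount (tmWord J (k+1)) [1,0] ∧
            occCount (tmWord (2*J+1) (2*k)) [1,1] = occCount (tmWord J (k+1)) [0,1] := by
          intro J
          obtain ⟨-, -, c3, c4⟩ := child_occ_eq J k
          have hsucc : tmWord (2*J+1) (2*k+1) = tmWord (2*J+1) (2*k) ++ [tm (2*J+1+2*k)] :=
            tmWord_succ _ _
          have hdrop : (tmWord (2*J+1) (2*k)).drop ((tmWord (2*J+1) (2*k)).length - 1)
              = [tm (J+k)] := by
            rw [tmWord_length, tmWord_drop_last' _ _ (by omega),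
              (by omega : 2*J+1 + (2*k-1) = 2*(J+k)), tm_double]
          have hcl : tm (2*J+1+2*k) = tm (J+k) + 1 := by
            rw [(by omega : 2*J+1+2*k = 2*(J+k)+1), tm_double_add_one]
          have e00 := occCount_snoc (tmWord (2*J+1) (2*k)) (tmWord_ne_nil' _ _ (by omega))
            (tm (2*J+1+2*k)) [0,0] (by rfl)
          have e11 := occCount_snoc (tmWord (2*J+1) (2*k)) (tmWord_ne_nil' _ _ (by omega))
            (tm (2*J+1+2*k)) [1,1] (by rfl)
          rw [hdrop] at e00 e11
          rw [← hsucc, hcl] at e00 e11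
          rw [c3] at e00; rw [c4] at e11
          rcases fin2 (tm (J+k)) with h | h <;> rw [h] at e00 e11 <;>
            simp [show ((0:Fin 2)+1) = 1 from rfl, show ((1:Fin 2)+1) = 0 from rfl]
              at e00 e11 <;> omega
        obtain ⟨k1, k2⟩ := key j
        obtain ⟨k1', k2'⟩ := key j'
        refine ⟨2 * j' + 1, ?_, ?_, ?_⟩
        · rw [tmWord_take_one' _ _ (by omega), tmWord_take_one' _ _ (by omega),
            tm_double_add_one, tm_double_add_one]
          simp [h1]
        · rw [tmWord_drop_last' _ _ (by omega), tmWord_drop_last' _ _ (by omega),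
            (by omega : 2*j' + 1 + (2*k - 1) = 2*(j' + k)),
            (by omega : 2*j + 1 + (2*k - 1) = 2*(j + k)),
            tm_double, tm_double]
          simp [h2]
        · have s1 := occ_sum (tmWord j (k+1)) (tmWord_ne_nil _ _)
          have s2 := occ_sum (tmWord j' (k+1)) (tmWord_ne_nil _ _)
          rw [tmWord_length] at s1 s2
          omega
    · -- m = 2k+1
      have hkge : 1 ≤ k := by omega
      subst hk
      rcases Nat.even_or_odd i with ⟨j, hj⟩ | ⟨j, hj⟩
      · have hj2 : i = 2 * j := by omega
        subst hj2
        obtain ⟨j', h1, h2, h3⟩ := IH (k+1) (by omega) j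
        rw [tmWord_take_one' j _ (by omega), tmWord_take_one' j' _ (by omega)] at h1
        rw [tmWord_drop_last' j _ (by omega), tmWord_drop_last' j' _ (by omega)] at h2
        simp only [List.map_cons, List.map_nil, List.cons.injEq, and_true] at h1 h2
        rw [(by omega : j + (k + 1 - 1)= j + k), (by omega : j' + (k + 1 - 1) = j' + k)] at h2
        obtain ⟨c1, c2, -, -⟩ := child_occ_eq j k
        obtain ⟨c1', c2', -, -⟩ := child_occ_eq j' k
        refine ⟨2 * j', ?_, ?_, ?_⟩
        · rw [tmWord_take_one' _ _ (by omega), tmWord_take_one' _ _ (by omega),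
            tm_double, tm_double]
          simp [h1]
        · rw [tmWord_drop_last' _ _ (by omega), tmWord_drop_last' _ _ (by omega),
            (by omega : 2*j' + (2*k + 1 - 1) = 2*(j' + k)),
            (by omega : 2*j + (2*k + 1 - 1) = 2*(j + k)),
            tm_double, tm_double]
          simp [h2]
        · have s1 := occ_sum (tmWord j (k+1)) (tmWord_ne_nil _ _)
          have s2 := occ_sum (tmWord j' (k+1)) (tmWord_ne_nil _ _)
          rw [tmWord_length] at s1 s2
          omega
      · have hj2 : i = 2 * j + 1 := by omega
        subst hj2
        obtain ⟨j', h1, h2, h3⟩ := IH (k+1) (by omega) j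
        rw [tmWord_take_one' j _ (by omega), tmWord_take_one' j' _ (by omega)] at h1
        rw [tmWord_drop_last' j _ (by omega), tmWord_drop_last' j' _ (by omega)] at h2
        simp only [List.map_cons, List.map_nil, List.cons.injEq, and_true] at h1 h2
        rw [(by omega : j + (k + 1 - 1)= j + k), (by omega : j' + (k + 1 - 1) = j' + k)] at h2
        obtain ⟨-, -, c3, c4⟩ := child_occ_eq j k
        obtain ⟨-, -, c3', c4'⟩ := child_occ_eq j' k
        refine ⟨2 * j' + 1, ?_, ?_, ?_⟩
        · rw [tmWord_take_one' _ _ (by omega), tmWord_take_one' _ _ (by omega),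
            tm_double_add_one, tm_double_add_one]
          simp [h1]
        · rw [tmWord_drop_last' _ _ (by omega), tmWord_drop_last' _ _ (by omega),
            (by omega : 2*j' + 1 + (2*k + 1 - 1) = 2*(j' + k) + 1),
            (by omega : 2*j + 1 + (2*k + 1 - 1) = 2*(j + k) + 1),
            tm_double_add_one, tm_double_add_one]
          simp [h2]
        · have s1 := occ_sum (tmWord j (k+1)) (tmWord_ne_nil _ _)
          have s2 := occ_sum (tmWord j' (k+1)) (tmWord_ne_nil _ _)
          rw [tmWord_length] at s1 s2
          omega

def Jinv (w : List (Fin 2)) : List (Fin 2) × List (Fin 2) × ℕ × ℕ :=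
  (w.take 1, w.drop (w.length - 1), occCount w [1,0], occCount w [0,1])
def Fl (q : List (Fin 2) × List (Fin 2) × ℕ × ℕ) : List (Fin 2) × List (Fin 2) × ℕ × ℕ :=
  (q.1.map (fun c => c+1), q.2.1.map (fun c => c+1), q.2.2)
def Phi (n : ℕ) (q : List (Fin 2) × List (Fin 2) × ℕ × ℕ) :
    List (Fin 2) × List (Fin 2) × ℕ × ℕ :=
  (q.1, q.2.1, n - q.2.2.2, n - q.2.2.1)

lemma image_TSet (f : List (Fin 2) → List (Fin 2) × List (Fin 2) × ℕ × ℕ) (m : ℕ) :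
    f '' TSet m = Set.range (fun i => f (tmWord i m)) := by
  ext q
  constructor
  · rintro ⟨w, ⟨hl, i, hf⟩, rfl⟩
    rw [hl] at hf
    exact ⟨i, by show f (tmWord i m) = f w; rw [hf]⟩
  · rintro ⟨i, rfl⟩
    have hmem : tmWord i m ∈ TSet m := ⟨tmWord_length i m, ⟨i, by rw [tmWord_length]⟩⟩
    exact Set.mem_image_of_mem f hmem

lemma Fl_Fl (q : List (Fin 2) × List (Fin 2) × ℕ × ℕ) : Fl (Fl q) = q := by
  obtain ⟨a, b, x, y⟩ := q
  have hmap : ∀ l : List (Fin 2), (l.map (fun c => c+1)).map (fun c => c+1) = l := by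
    intro l
    rw [List.map_map,
      show ((fun c : Fin 2 => c+1) ∘ (fun c : Fin 2 => c+1)) = id by
        funext c; simp; omega]
    simp
  simp only [Fl]
  rw [hmap, hmap]

lemma Phi_Fl (n : ℕ) (q) : Phi n (Fl q) = Fl (Phi n q) := rfl

lemma IJ_even (j k : ℕ) : Iinv (tmWord (2*j) (2*k+1)) = Jinv (tmWord j (k+1)) := by
  obtain ⟨c1, c2, -, -⟩ := child_occ_eq j k
  refine Prod.ext ?_ (Prod.ext ?_ (Prod.ext ?_ ?_)) <;>
    simp only [Iinv, Jinv]
  · rw [show (2*k+1) = 2*k+1 from rfl, tmWord_take_one, tmWord_take_one, tm_double]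
  · rw [tmWord_drop_last, tmWord_drop_last,
      show (2*j : ℕ) + 2*k = 2*(j+k) from by ring, tm_double]
  · exact c1
  · exact c2

lemma IJ_odd (j k : ℕ) : Iinv (tmWord (2*j+1) (2*k+1)) = Fl (Jinv (tmWord j (k+1))) := by
  obtain ⟨-, -, c3, c4⟩ := child_occ_eq j k
  refine Prod.ext ?_ (Prod.ext ?_ (Prod.ext ?_ ?_)) <;>
    simp only [Iinv, Jinv, Fl]
  · rw [tmWord_take_one, tmWord_take_one, tm_double_add_one]; rfl
  · rw [tmWord_drop_last, tmWord_drop_last,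
      show (2*j : ℕ) + 1 + 2*k = 2*(j+k) + 1 from by ring, tm_double_add_one]; rfl
  · exact c3
  · exact c4

lemma lemA (k : ℕ) : Iinv '' TSet (2*k+1) =
    Jinv '' TSet (k+1) ∪ Fl '' (Jinv '' TSet (k+1)) := by
  rw [image_TSet, image_TSet, ← Set.range_comp]
  ext q
  constructor
  · rintro ⟨i, rfl⟩
    rcases Nat.even_or_odd i with ⟨j, hj⟩ | ⟨j, hj⟩
    · left
      exact ⟨j, by rw [show i = 2*j from by omega]; exact (IJ_even j k).symm⟩
    · right
      exact ⟨j, by rw [show i = 2*j+1 from by omega]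
                   show Fl (Jinv _) = _
                   exact (IJ_odd j k).symm⟩
  · rintro (⟨j, rfl⟩ | ⟨j, rfl⟩)
    · exact ⟨2*j, IJ_even j k⟩
    · exact ⟨2*j+1, IJ_odd j k⟩

lemma occ_bounds (i n : ℕ) : occCount (tmWord i (n+1)) [1,0] ≤ n ∧
    occCount (tmWord i (n+1)) [0,1] ≤ n := by
  have := occ_sum (tmWord i (n+1)) (tmWord_ne_nil i n)
  rw [tmWord_length] at this
  omega

lemma JB1 (n j : ℕ) :
    Jinv (tmWord (2*j) (2*n+1)) = Phi n (Jinv (tmWord j (n+1))) := by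
  obtain ⟨x1, x2, -, -⟩ := child_occ_cross j n
  obtain ⟨b1, b2⟩ := occ_bounds j n
  refine Prod.ext ?_ (Prod.ext ?_ (Prod.ext ?_ ?_)) <;> simp only [Jinv, Phi]
  · rw [tmWord_take_one, tmWord_take_one, tm_double]
  · rw [tmWord_drop_last, tmWord_drop_last,
      show (2*j : ℕ) + 2*n = 2*(j+n) from by ring, tm_double]
  · omega
  · omega

lemma JB2 (n j : ℕ) : ∃ q,
    (q ∈ Set.range (fun i => Jinv (tmWord i (n+1))) ∪
      Fl '' Set.range (fun i => Jinv (tmWord i (n+1)))) ∧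
    Jinv (tmWord (2*j+1) (2*n+1)) = Phi n q := by
  obtain ⟨-, -, x3, x4⟩ := child_occ_cross j n
  obtain ⟨b1, b2⟩ := occ_bounds j n
  have e0 : ((0:Fin 2)+1) = 1 := rfl
  have e1 : ((1:Fin 2)+1) = 0 := rfl
  have ht1 : (tmWord (2*j+1) (2*n+1)).take 1 = [tm j + 1] := by
    rw [tmWord_take_one, tm_double_add_one]
  have ht2 : (tmWord (2*j+1) (2*n+1)).drop ((tmWord (2*j+1) (2*n+1)).length - 1)
      = [tm (j+n) + 1] := by
    rw [tmWord_drop_last, show (2*j : ℕ) + 1 + 2*n = 2*(j+n) + 1 from by ring,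
      tm_double_add_one]
  rcases eq_or_ne (tm j) (tm (j+n)) with hab | hab
  · refine ⟨Fl (Jinv (tmWord j (n+1))), Or.inr ⟨_, ⟨j, rfl⟩, rfl⟩, ?_⟩
    refine Prod.ext ?_ (Prod.ext ?_ (Prod.ext ?_ ?_)) <;>
      simp only [Jinv, Phi, Fl]
    · rw [ht1, tmWord_take_one]; rfl
    · rw [ht2, tmWord_drop_last]; rfl
    · have hx := x3
      rw [← hab] at hx
      rcases fin2 (tm j) with h | h <;> rw [h] at hx <;> simp at hx <;> omega
    · have hx := x4
      rw [← hab] at hx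
      rcases fin2 (tm j) with h | h <;> rw [h] at hx <;> simp at hx <;> omega
  · obtain ⟨j', f1, f2, f3⟩ := flip_closure (n+1) j
    rw [tmWord_take_one, tmWord_take_one] at f1
    rw [show (n+1) - 1 = n from rfl] at f2
    have hd : ∀ J : ℕ, (tmWord J (n+1)).drop n = [tm (J + n)] := by
      intro J
      have := tmWord_drop_last J n
      rwa [tmWord_length, Nat.add_sub_cancel] at this
    rw [hd, hd] at f2
    simp only [List.map_cons, List.map_nil, List.cons.injEq, and_true] at f1 f2
    have sw := occ_sum (tmWord j (n+1)) (tmWord_ne_nil j n)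
    have sw' := occ_sum (tmWord j' (n+1)) (tmWord_ne_nil j' n)
    rw [tmWord_length] at sw sw'
    have dw := occ_diff (tmWord j (n+1)) (tmWord_ne_nil j n)
    have dw' := occ_diff (tmWord j' (n+1)) (tmWord_ne_nil j' n)
    rw [tmWord_take_one, tmWord_drop_last] at dw dw'
    rw [f1, f2] at dw'
    obtain ⟨b1', b2'⟩ := occ_bounds j' n
    refine ⟨Jinv (tmWord j' (n+1)), Or.inl ⟨j', rfl⟩, ?_⟩
    refine Prod.ext ?_ (Prod.ext ?_ (Prod.ext ?_ ?_)) <;> simp only [Jinv, Phi]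
    · rw [ht1, tmWord_take_one, f1]
    · rw [ht2, tmWord_drop_last, f2]
    · rcases fin2 (tm j) with h | h <;> rcases fin2 (tm (j+n)) with h' | h' <;>
        first
          | exact absurd (h.trans h'.symm) hab
          | (rw [h, h'] at x3 dw dw'
             simp [e0, e1] at x3 dw dw'
             omega)
    · rcases fin2 (tm j) with h | h <;> rcases fin2 (tm (j+n)) with h' | h' <;>
        first
          | exact absurd (h.trans h'.symm) hab
          | (rw [h, h'] at x4 dw dw'
             simp [e0, e1] at x4 dw dw'
             omega)

lemma lemB (n : ℕ) :
    Jinv '' TSet (2*n+1) ∪ Fl '' (Jinv '' TSet (2*n+1)) =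
      Phi n '' (Jinv '' TSet (n+1) ∪ Fl '' (Jinv '' TSet (n+1))) := by
  rw [image_TSet, image_TSet]
  ext q
  constructor
  · rintro (⟨i, rfl⟩ | ⟨q', ⟨i, rfl⟩, rfl⟩)
    · rcases Nat.even_or_odd i with ⟨j, hj⟩ | ⟨j, hj⟩
      · rw [show i = 2*j from by omega]
        exact ⟨Jinv (tmWord j (n+1)), Or.inl ⟨j, rfl⟩, (JB1 n j).symm⟩
      · rw [show i = 2*j+1 from by omega]
        obtain ⟨q0, hq0, heq⟩ := JB2 n j
        exact ⟨q0, hq0, heq.symm⟩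
    · rcases Nat.even_or_odd i with ⟨j, hj⟩ | ⟨j, hj⟩
      · rw [show i = 2*j from by omega]
        refine ⟨Fl (Jinv (tmWord j (n+1))), Or.inr ⟨_, ⟨j, rfl⟩, rfl⟩, ?_⟩
        rw [Phi_Fl, ← JB1]
      · rw [show i = 2*j+1 from by omega]
        obtain ⟨q0, hq0, heq⟩ := JB2 n j
        rcases hq0 with ⟨i0, rfl⟩ | ⟨r, hr, rfl⟩
        · refine ⟨Fl (Jinv (tmWord i0 (n+1))), Or.inr ⟨_, ⟨i0, rfl⟩, rfl⟩, ?_⟩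
          rw [Phi_Fl, ← heq]
        · refine ⟨r, Or.inl hr, ?_⟩
          rw [← Fl_Fl (Phi n r), ← Phi_Fl, ← heq]
  · rintro ⟨q0, (⟨j, rfl⟩ | ⟨r, ⟨j, rfl⟩, rfl⟩), rfl⟩
    · exact Or.inl ⟨2*j, JB1 n j⟩
    · refine Or.inr ⟨Jinv (tmWord (2*j) (2*n+1)), ⟨2*j, rfl⟩, ?_⟩
      rw [Phi_Fl, ← JB1]

lemma injPhi (n : ℕ) : Set.InjOn (Phi n)
    (Jinv '' TSet (n+1) ∪ Fl '' (Jinv '' TSet (n+1))) := by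
  rw [image_TSet]
  have hb : ∀ q, (q ∈ Set.range (fun i => Jinv (tmWord i (n+1))) ∪
      Fl '' Set.range (fun i => Jinv (tmWord i (n+1)))) →
      q.2.2.1 ≤ n ∧ q.2.2.2 ≤ n := by
    rintro q (⟨i, rfl⟩ | ⟨r, ⟨i, rfl⟩, rfl⟩)
    · exact occ_bounds i n
    · exact occ_bounds i n
  intro q hq p hp h
  obtain ⟨hq1, hq2⟩ := hb q hq
  obtain ⟨hp1, hp2⟩ := hb p hp
  obtain ⟨a, b, x, y⟩ := q
  obtain ⟨a', b', x', y'⟩ := p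
  simp only [Phi, Prod.mk.injEq] at h ⊢
  simp only at hq1 hq2 hp1 hp2
  obtain ⟨h1, h2, h3, h4⟩ := h
  exact ⟨h1, h2, by omega, by omega⟩

theorem thueMorse_P_four_n_add_one (n : ℕ) : P (4 * n + 1) = P (2 * n + 1) := by
  rw [P_eq, P_eq, show 4 * n + 1 = 2 * (2 * n) + 1 from by ring, lemA (2*n), lemA n,
    lemB n, Set.ncard_image_of_injOn (injPhi n)]
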